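/- Every group-p-USF representation π of a discrete group G on a Banach space X is invertibly isometrically equivalent to a subrepresentation of the p-left regular representation λ of G, namely to g ↦ λ_g restricted to θ_f(X); the intertwining invertible isometry is θ_f: X → θ_f(X). -/

import Mathlib

open scoped ENNReal

/-- Every group-p-USF representation is invertibly isometrically equivalent (via the
analysis operator `θ_f`) to the subrepresentation of the p-left regular
representation on `θ_f(X)`. -/
theorem groupPUSF_representation_equivalent_to_subrepresentation_of_left_regular
    (G : Type*) [Group G] [Countable G] [DecidableEq G]
    (p : ℝ≥0∞) [Fact (1 ≤ p)] (hp : p ≠ ∞)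
    {X : Type*} [NormedAddCommGroup X] [NormedSpace ℂ X] [CompleteSpace X]
    (f : G → (X →L[ℂ] ℂ)) (τ : G → X)
    (hrec : ∀ x : X, HasSum (fun g => f g x • τ g) x)
    (θf : X →L[ℂ] lp (fun _ : G => ℂ) p)
    (hθf : ∀ (x : X) (g : G), θf x g = f g x)
    (hiso : ∀ x, ‖θf x‖ = ‖x‖)
    (θτ : lp (fun _ : G => ℂ) p →L[ℂ] X)
    (hθτ : ∀ a : lp (fun _ : G => ℂ) p, HasSum (fun g => a g • τ g) (θτ a))
    (π : G → (X ≃ₗᵢ[ℂ] X))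
    (hπ : ∀ g h : G, ∀ x : X, π (g * h) x = π g (π h x))
    (f₀ : X →L[ℂ] ℂ) (τ₀ : X)
    (hf : ∀ (g : G) (x : X), f g x = f₀ (π g⁻¹ x))
    (hτ : ∀ g : G, τ g = π g τ₀)
    (lam : G → (lp (fun _ : G => ℂ) p →L[ℂ] lp (fun _ : G => ℂ) p))
    (hlam : ∀ g h : G, lam g (lp.single p h 1) = lp.single p (g * h) 1) :
    (∀ g : G, Set.MapsTo (lam g) (Set.range ⇑θf) (Set.range ⇑θf)) ∧
    (∀ (g : G) (x : X), lam g (θf x) = θf (π g x)) ∧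
    Function.Injective ⇑θf ∧
    (∀ x, ‖θf x‖ = ‖x‖) := by
  have hπ1 : ∀ x : X, π 1 x = x := by
    intro x
    have h1 : π 1 (π 1 x) = π 1 x := by rw [← hπ 1 1 x, one_mul]
    exact (π 1).injective h1
  have hinv : ∀ (g : G) (x : X), π g⁻¹ (π g x) = x := by
    intro g x
    rw [← hπ g⁻¹ g x, inv_mul_cancel, hπ1]
  have key : ∀ (g : G) (x : X), lam g (θf x) = θf (π g x) := by
    intro g x
    -- sum representation of θf x
    have h1 : HasSum (fun k : G => lp.single p k (θf x k)) (θf x) :=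
      lp.hasSum_single hp (θf x)
    have h2 : HasSum (fun k : G => lam g (lp.single p k (θf x k))) (lam g (θf x)) :=
      (lam g).hasSum h1
    have h2' : HasSum (fun k : G => f k x • (lp.single p (g * k) (1 : ℂ) : lp (fun _ : G => ℂ) p)) (lam g (θf x)) := by
      refine h2.congr_fun fun k => ?_
      have : lp.single p k (θf x k) = f k x • (lp.single p k (1 : ℂ) : lp (fun _ : G => ℂ) p) := by
        rw [← lp.single_smul, smul_eq_mul, mul_one, hθf]
      rw [this, map_smul, hlam]
    have h3 : HasSum (fun k : G => lp.single p k (θf (π g x) k)) (θf (π g x)) :=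
      lp.hasSum_single hp (θf (π g x))
    have h3' : HasSum (fun k : G => lp.single p (g * k) (θf (π g x) (g * k)))
        (θf (π g x)) := by
      have := (Equiv.mulLeft g).hasSum_iff.mpr h3
      exact this
    have h3'' : HasSum (fun k : G => f k x • (lp.single p (g * k) (1 : ℂ) : lp (fun _ : G => ℂ) p)) (θf (π g x)) := by
      refine h3'.congr_fun fun k => ?_
      have hcoef : θf (π g x) (g * k) = f k x := by
        rw [hθf, hf, hf, mul_inv_rev, hπ, hinv]
      rw [hcoef, ← lp.single_smul, smul_eq_mul, mul_one]
    exact h2'.unique h3''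
  refine ⟨?_, key, ?_, hiso⟩
  · rintro g _ ⟨x, rfl⟩
    exact ⟨π g x, (key g x).symm⟩
  · intro x y hxy
    have : ‖x - y‖ = 0 := by rw [← hiso, map_sub, hxy, sub_self, norm_zero]
    simpa [sub_eq_zero] using norm_eq_zero.mp this
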